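/- Let G be a finite graph, v a vertex of degree 3 with incident edges e_1, e_2, e_3 (none of which is a loop, and e_1, e_2, e_3 pairwise distinct), and C a finite set of cycles of G. Extend C* to the map (½ℤ)^{E(G)} → (½ℤ)^C. Then C*( ½(e_1 + e_2 − e_3) ) = Σ_{c ∈ C : e_1 ∈ c and e_2 ∈ c} c; in particular this element lies in ℤ^C. -/
import Mathlib


/-- A cycle of length `k` in the graph with vertex set `V`, edge set `E` and
source/target maps `s t : E → V`: `k` distinct vertices and `k` distinct edges
with `{s(eᵢ), t(eᵢ)} = {vᵢ, vᵢ₊₁}` (indices mod `k`). -/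
structure GCycle {V E : Type*} (s t : E → V) (k : ℕ) where
  pos : 0 < k
  vtx : ZMod k → V
  edg : ZMod k → E
  vtx_inj : Function.Injective vtx
  edg_inj : Function.Injective edg
  ends : ∀ i, ({s (edg i), t (edg i)} : Set V) = {vtx i, vtx (i + 1)}

/-- A cycle of the graph (of some length). -/
abbrev GraphCycle {V E : Type*} (s t : E → V) : Type _ := (k : ℕ) × GCycle s t k

/-- The edge `e` belongs to the cycle `c`. -/
def GraphCycle.memE {V E : Type*} {s t : E → V} (c : GraphCycle s t) (e : E) : Prop :=
  ∃ i, c.2.edg i = e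

open Classical in
/-- The map `C* : ℤ^{E(G)} → ℤ^C`, sending each edge `e` to the sum of the
cycles in `C` containing `e`, extended `ℤ`-linearly. -/
noncomputable def cycleMap {V E : Type*} [Fintype E] (s t : E → V)
    (C : Set (GraphCycle s t)) (x : E → ℤ) : C → ℤ :=
  fun c => ∑ e : E, if (c : GraphCycle s t).memE e then x e else 0

open Classical in
/-- The extension of the map `C*` to half-integer (here: rational) coefficients. -/
noncomputable def cycleMapQ {V E : Type*} [Fintype E] (s t : E → V)
    (C : Set (GraphCycle s t)) (x : E → ℚ) : C → ℚ :=
  fun c => ∑ e : E, if (c : GraphCycle s t).memE e then x e else 0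

/-- Any cycle meeting a vertex of degree 3 uses exactly two of the three incident edges. -/
lemma GraphCycle.two_of_three {V E : Type*} {s t : E → V} (c : GraphCycle s t)
    (v : V) (e₁ e₂ e₃ : E)
    (h12 : e₁ ≠ e₂) (h13 : e₁ ≠ e₃) (h23 : e₂ ≠ e₃)
    (hl1 : s e₁ ≠ t e₁) (hl2 : s e₂ ≠ t e₂) (hl3 : s e₃ ≠ t e₃)
    (hinc : ∀ e : E, (s e = v ∨ t e = v) ↔ (e = e₁ ∨ e = e₂ ∨ e = e₃))
    (h : c.memE e₁ ∨ c.memE e₂ ∨ c.memE e₃) :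
    (c.memE e₁ ∧ c.memE e₂ ∧ ¬ c.memE e₃) ∨
    (c.memE e₁ ∧ ¬ c.memE e₂ ∧ c.memE e₃) ∨
    (¬ c.memE e₁ ∧ c.memE e₂ ∧ c.memE e₃) := by
  -- pick an edge of c incident to v
  obtain ⟨e, he, hnl⟩ : ∃ e, c.memE e ∧ (s e = v ∨ t e = v) := by
    rcases h with h | h | h
    · exact ⟨e₁, h, (hinc e₁).mpr (Or.inl rfl)⟩
    · exact ⟨e₂, h, (hinc e₂).mpr (Or.inr (Or.inl rfl))⟩
    · exact ⟨e₃, h, (hinc e₃).mpr (Or.inr (Or.inr rfl))⟩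
  have henl : s e ≠ t e := by
    rcases (hinc e).mp hnl with rfl | rfl | rfl <;> assumption
  obtain ⟨i₀, hi₀⟩ := he
  -- find j with vtx j = v
  have hv : v ∈ ({s e, t e} : Set V) := by rcases hnl with h' | h' <;> simp [h']
  rw [← hi₀] at hv
  rw [c.2.ends i₀] at hv
  obtain ⟨j, hj⟩ : ∃ j, c.2.vtx j = v := by
    rcases hv with h' | h'
    · exact ⟨i₀, h'.symm⟩
    · exact ⟨i₀ + 1, h'.symm⟩
  -- the cycle has length ≥ 2
  have hk2 : 1 < c.1 := by
    by_contra hk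
    push_neg at hk
    have h' : c.1 = 1 := le_antisymm hk c.2.pos
    have hsub : (i₀ : ZMod c.1) + 1 = i₀ := by
      have : Subsingleton (ZMod c.1) := by rw [h']; infer_instance
      exact Subsingleton.elim _ _
    have hends := c.2.ends i₀
    rw [hsub] at hends
    have hst : s (c.2.edg i₀) = c.2.vtx i₀ := by
      have hm : s (c.2.edg i₀) ∈ ({c.2.vtx i₀, c.2.vtx i₀} : Set V) := by rw [← hends]; simp
      simpa using hm
    have htt : t (c.2.edg i₀) = c.2.vtx i₀ := by
      have hm : t (c.2.edg i₀) ∈ ({c.2.vtx i₀, c.2.vtx i₀} : Set V) := by rw [← hends]; simp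
      simpa using hm
    rw [hi₀] at hst htt
    exact henl (hst.trans htt.symm)
  have hone : (1 : ZMod c.1) ≠ 0 := by
    haveI : Fact (1 < c.1) := ⟨hk2⟩
    exact one_ne_zero
  have hjj : j - 1 ≠ j := fun h' => hone (sub_eq_self.mp h')
  have hmf : c.memE (c.2.edg (j - 1)) := ⟨j - 1, rfl⟩
  have hmg : c.memE (c.2.edg j) := ⟨j, rfl⟩
  have hfg : c.2.edg (j - 1) ≠ c.2.edg j := fun h' => hjj (c.2.edg_inj h')
  have hfv : s (c.2.edg (j - 1)) = v ∨ t (c.2.edg (j - 1)) = v := by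
    have h1 := c.2.ends (j - 1)
    rw [sub_add_cancel] at h1
    have h2 : v ∈ ({s (c.2.edg (j - 1)), t (c.2.edg (j - 1))} : Set V) := by
      rw [h1]; right; exact hj.symm
    simpa [eq_comm] using h2
  have hgv : s (c.2.edg j) = v ∨ t (c.2.edg j) = v := by
    have h1 := c.2.ends j
    have h2 : v ∈ ({s (c.2.edg j), t (c.2.edg j)} : Set V) := by
      rw [h1]; left; exact hj.symm
    simpa [eq_comm] using h2
  have huniq : ∀ i, (s (c.2.edg i) = v ∨ t (c.2.edg i) = v) → i = j - 1 ∨ i = j := by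
    intro i hi
    have h2 : v ∈ ({s (c.2.edg i), t (c.2.edg i)} : Set V) := by
      rcases hi with h' | h' <;> simp [h']
    rw [c.2.ends i] at h2
    rcases h2 with h' | h'
    · right; exact c.2.vtx_inj (h'.symm.trans hj.symm)
    · left; exact eq_sub_of_add_eq (c.2.vtx_inj (h'.symm.trans hj.symm))
  have hmem : ∀ a, (a = e₁ ∨ a = e₂ ∨ a = e₃) →
      (c.memE a ↔ a = c.2.edg (j - 1) ∨ a = c.2.edg j) := by
    intro a ha
    constructor
    · rintro ⟨i, rfl⟩
      rcases huniq i ((hinc _).mpr ha) with h' | h'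
      · left; rw [h']
      · right; rw [h']
    · rintro (rfl | rfl)
      · exact hmf
      · exact hmg
  have hf3 := (hinc _).mp hfv
  have hg3 := (hinc _).mp hgv
  have m1 := hmem e₁ (Or.inl rfl)
  have m2 := hmem e₂ (Or.inr (Or.inl rfl))
  have m3 := hmem e₃ (Or.inr (Or.inr rfl))
  rw [m1, m2, m3]
  have h21 : e₂ ≠ e₁ := h12.symm
  have h31 : e₃ ≠ e₁ := h13.symm
  have h32 : e₃ ≠ e₂ := h23.symm
  rcases hf3 with hf | hf | hf <;> rcases hg3 with hg | hg | hg <;>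
    first
      | exact absurd (hf.trans hg.symm) hfg
      | simp_all

open Classical in
/-- Let `v` be a vertex of degree 3 whose incident edges are exactly the pairwise
distinct non-loop edges `e₁, e₂, e₃`, and let `C` be a finite set of cycles.  Then
`C*(½(e₁ + e₂ − e₃)) = Σ_{c ∈ C : e₁ ∈ c, e₂ ∈ c} c`; in particular this element
has integer coordinates. -/
theorem cycleMapQ_half_sum_at_degree_three_vertex {V E : Type*} [Fintype V] [Fintype E]
    (s t : E → V) (v : V) (e₁ e₂ e₃ : E)
    (h12 : e₁ ≠ e₂) (h13 : e₁ ≠ e₃) (h23 : e₂ ≠ e₃)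
    (hl1 : s e₁ ≠ t e₁) (hl2 : s e₂ ≠ t e₂) (hl3 : s e₃ ≠ t e₃)
    (hinc : ∀ e : E, (s e = v ∨ t e = v) ↔ (e = e₁ ∨ e = e₂ ∨ e = e₃))
    (C : Set (GraphCycle s t)) (hC : C.Finite) :
    cycleMapQ s t C (fun e => (1/2 : ℚ) * ((if e = e₁ then 1 else 0) +
        (if e = e₂ then 1 else 0) - (if e = e₃ then 1 else 0)))
      = fun c : C => if (c : GraphCycle s t).memE e₁ ∧ (c : GraphCycle s t).memE e₂
          then ((1 : ℤ) : ℚ) else ((0 : ℤ) : ℚ) := by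
  funext c
  set d : GraphCycle s t := (c : GraphCycle s t) with hd
  have key : ∀ a : E, (∑ e : E, if d.memE e then (if e = a then (1:ℚ) else 0) else 0)
      = if d.memE a then (1:ℚ) else 0 := by
    intro a
    rw [Finset.sum_congr rfl (g := fun e => if e = a then (if d.memE a then (1:ℚ) else 0) else 0)
      (fun e _ => by by_cases h : e = a <;> simp [h])]
    simp
  have hsum : cycleMapQ s t C (fun e => (1/2 : ℚ) * ((if e = e₁ then 1 else 0) +
        (if e = e₂ then 1 else 0) - (if e = e₃ then 1 else 0))) c
      = (1/2 : ℚ) * ((if d.memE e₁ then 1 else 0) + (if d.memE e₂ then 1 else 0)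
          - (if d.memE e₃ then 1 else 0)) := by
    show (∑ e : E, if d.memE e then (1/2 : ℚ) * ((if e = e₁ then 1 else 0) +
        (if e = e₂ then 1 else 0) - (if e = e₃ then 1 else 0)) else 0) = _
    rw [Finset.sum_congr rfl (g := fun e => (1/2 : ℚ) *
        ((if d.memE e then (if e = e₁ then (1:ℚ) else 0) else 0) +
         (if d.memE e then (if e = e₂ then (1:ℚ) else 0) else 0) -
         (if d.memE e then (if e = e₃ then (1:ℚ) else 0) else 0)))
      (fun e _ => by by_cases h : d.memE e <;> simp [h])]
    rw [← Finset.mul_sum, Finset.sum_sub_distrib, Finset.sum_add_distrib,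
      key e₁, key e₂, key e₃]
  rw [hsum]
  by_cases b1 : d.memE e₁ <;> by_cases b2 : d.memE e₂ <;> by_cases b3 : d.memE e₃
  · rcases d.two_of_three v e₁ e₂ e₃ h12 h13 h23 hl1 hl2 hl3 hinc (Or.inl b1) with
      h | h | h <;> tauto
  · simp [b1, b2, b3]
    try norm_num
  · rcases d.two_of_three v e₁ e₂ e₃ h12 h13 h23 hl1 hl2 hl3 hinc (Or.inl b1) with
      h | h | h <;> try tauto
    simp [b1, b2, b3]
    try norm_num
  · rcases d.two_of_three v e₁ e₂ e₃ h12 h13 h23 hl1 hl2 hl3 hinc (Or.inl b1) with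
      h | h | h <;> tauto
  · rcases d.two_of_three v e₁ e₂ e₃ h12 h13 h23 hl1 hl2 hl3 hinc (Or.inr (Or.inl b2)) with
      h | h | h <;> try tauto
    simp [b1, b2, b3]
    try norm_num
  · rcases d.two_of_three v e₁ e₂ e₃ h12 h13 h23 hl1 hl2 hl3 hinc (Or.inr (Or.inl b2)) with
      h | h | h <;> tauto
  · rcases d.two_of_three v e₁ e₂ e₃ h12 h13 h23 hl1 hl2 hl3 hinc (Or.inr (Or.inr b3)) with
      h | h | h <;> tauto
  · simp [b1, b2, b3]
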